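/- arXiv:0806.0041 — 12 statements merged into one kernel-verified Lean document; each statement's English description precedes it below -/
import Mathlib

section
/- Let A, B, C be rings, ρ₁, ρ₂ : B → C and σ₁, σ₂ : A → B ring homomorphisms. If ρ₁ ≤ ρ₂ and σ₁ ≤ σ₂, then the composites satisfy ρ₁∘σ₁ ≤ ρ₂∘σ₂. -/
/-- `t` is an intertwiner from the ring homomorphism `α` to the ring homomorphism `β`:
an element `t ∈ B` with `t·α(a) = β(a)·t` for all `a ∈ A`. -/
def IsIntertwiner {A B : Type*} [Ring A] [Ring B] (α β : A →+* B) (t : B) : Prop :=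
  ∀ a : A, t * α a = β a * t

/-- `ρ ≤ σ` for parallel ring homomorphisms: there is a direct summand diagram, i.e.
intertwiners `b i : ρ → σ` and `a i : σ → ρ` with `∑ i, a i * b i = 1`. -/
def RingHomLE {A B : Type*} [Ring A] [Ring B] (ρ σ : A →+* B) : Prop :=
  ∃ (n : ℕ) (b a : Fin n → B),
    (∀ i, IsIntertwiner ρ σ (b i)) ∧ (∀ i, IsIntertwiner σ ρ (a i)) ∧
    (∑ i, a i * b i) = 1

/-- If `ρ₁ ≤ ρ₂` and `σ₁ ≤ σ₂` then `ρ₁∘σ₁ ≤ ρ₂∘σ₂`. -/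
theorem stmt_1 {A B C : Type*} [Ring A] [Ring B] [Ring C]
    (ρ₁ ρ₂ : B →+* C) (σ₁ σ₂ : A →+* B)
    (h₁ : RingHomLE ρ₁ ρ₂) (h₂ : RingHomLE σ₁ σ₂) :
    RingHomLE (ρ₁.comp σ₁) (ρ₂.comp σ₂) := by
  obtain ⟨n, b, a, hb, ha, hab⟩ := h₁
  obtain ⟨m, d, c, hd, hc, hcd⟩ := h₂
  refine ⟨n * m, fun k => ρ₂ (d (finProdFinEquiv.symm k).2) * b (finProdFinEquiv.symm k).1,
    fun k => a (finProdFinEquiv.symm k).1 * ρ₂ (c (finProdFinEquiv.symm k).2), ?_, ?_, ?_⟩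
  · intro k x
    set i := (finProdFinEquiv.symm k).1
    set j := (finProdFinEquiv.symm k).2
    have h1 : b i * ρ₁ (σ₁ x) = ρ₂ (σ₁ x) * b i := hb i (σ₁ x)
    have h2 : d j * σ₁ x = σ₂ x * d j := hd j x
    calc ρ₂ (d j) * b i * (ρ₁.comp σ₁) x = ρ₂ (d j) * (b i * ρ₁ (σ₁ x)) := by
          simp [RingHom.comp_apply, mul_assoc]
      _ = ρ₂ (d j) * (ρ₂ (σ₁ x) * b i) := by rw [h1]
      _ = ρ₂ (d j * σ₁ x) * b i := by simp [mul_assoc]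
      _ = ρ₂ (σ₂ x * d j) * b i := by rw [h2]
      _ = (ρ₂.comp σ₂) x * (ρ₂ (d j) * b i) := by simp [RingHom.comp_apply, mul_assoc]
  · intro k x
    set i := (finProdFinEquiv.symm k).1
    set j := (finProdFinEquiv.symm k).2
    have h1 : a i * ρ₂ (σ₁ x) = ρ₁ (σ₁ x) * a i := ha i (σ₁ x)
    have h2 : c j * σ₂ x = σ₁ x * c j := hc j x
    calc a i * ρ₂ (c j) * (ρ₂.comp σ₂) x = a i * ρ₂ (c j * σ₂ x) := by
          simp [RingHom.comp_apply, mul_assoc]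
      _ = a i * ρ₂ (σ₁ x * c j) := by rw [h2]
      _ = a i * ρ₂ (σ₁ x) * ρ₂ (c j) := by simp [mul_assoc]
      _ = ρ₁ (σ₁ x) * a i * ρ₂ (c j) := by rw [h1]
      _ = (ρ₁.comp σ₁) x * (a i * ρ₂ (c j)) := by simp [RingHom.comp_apply, mul_assoc]
  · rw [← Equiv.sum_comp finProdFinEquiv]
    simp only [Equiv.symm_apply_apply]
    rw [Fintype.sum_prod_type]
    have : ∀ i : Fin n, ∑ j : Fin m,
        a i * ρ₂ (c j) * (ρ₂ (d j) * b i) = a i * b i := by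
      intro i
      calc ∑ j : Fin m, a i * ρ₂ (c j) * (ρ₂ (d j) * b i)
          = a i * ρ₂ (∑ j, c j * d j) * b i := by
            rw [map_sum, Finset.mul_sum, Finset.sum_mul]
            exact Finset.sum_congr rfl fun j _ => by simp [mul_assoc]
        _ = a i * b i := by rw [hcd]; simp
    simp_rw [this]
    exact hab
end

section
/- Let A and B be rings and let (m₁, e₁) : λ₁ ⊣ ρ₁ and (m₂, e₂) : λ₂ ⊣ ρ₂ be two adjunctions in the 2-category of rings, with λ₁, λ₂ : A → B and ρ₁, ρ₂ : B → A. Then λ₁ ≤ λ₂ if and only if ρ₁ ≤ ρ₂. -/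
/-- `(m, e) : l ⊣ r` is an adjunction in the 2-category of rings. -/
def IsRingAdjunction {A B : Type*} [Ring A] [Ring B]
    (l : A →+* B) (r : B →+* A) (m : A) (e : B) : Prop :=
  (∀ b : B, e * l (r b) = b * e) ∧ (∀ a : A, m * a = r (l a) * m) ∧
    r e * m = 1 ∧ e * l m = 1

section Aux

variable {A B : Type*} [Ring A] [Ring B]
  {l₁ l₂ : A →+* B} {r₁ r₂ : B →+* A} {m₁ m₂ : A} {e₁ e₂ : B}

/-- The mate of an intertwiner `t : l₁ → l₂` is an intertwiner `r₂ → r₁`. -/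
lemma mate_right (he₂ : ∀ c : B, e₂ * l₂ (r₂ c) = c * e₂)
    (hm₁ : ∀ a : A, m₁ * a = r₁ (l₁ a) * m₁)
    {t : B} (ht : IsIntertwiner l₁ l₂ t) :
    IsIntertwiner r₂ r₁ (r₁ (e₂ * t) * m₁) := by
  intro x
  calc r₁ (e₂ * t) * m₁ * r₂ x
      = r₁ (e₂ * t) * (m₁ * r₂ x) := by rw [mul_assoc]
    _ = r₁ (e₂ * t) * (r₁ (l₁ (r₂ x)) * m₁) := by rw [hm₁]
    _ = r₁ (e₂ * (t * l₁ (r₂ x))) * m₁ := by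
        simp only [map_mul]; noncomm_ring
    _ = r₁ (e₂ * l₂ (r₂ x) * t) * m₁ := by rw [ht, mul_assoc]
    _ = r₁ (x * e₂ * t) * m₁ := by rw [he₂]
    _ = r₁ x * (r₁ (e₂ * t) * m₁) := by
        simp only [map_mul]; noncomm_ring

/-- The mate of an intertwiner `s : r₂ → r₁` is an intertwiner `l₁ → l₂`. -/
lemma mate_left (he₁ : ∀ c : B, e₁ * l₁ (r₁ c) = c * e₁)
    (hm₂ : ∀ a : A, m₂ * a = r₂ (l₂ a) * m₂)
    {s : A} (hs : IsIntertwiner r₂ r₁ s) :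
    IsIntertwiner l₁ l₂ (e₁ * l₁ (s * m₂)) := by
  intro x
  calc e₁ * l₁ (s * m₂) * l₁ x
      = e₁ * l₁ (s * (m₂ * x)) := by
        simp only [map_mul]; noncomm_ring
    _ = e₁ * l₁ (s * (r₂ (l₂ x) * m₂)) := by rw [hm₂]
    _ = e₁ * l₁ (s * r₂ (l₂ x) * m₂) := by rw [mul_assoc]
    _ = e₁ * l₁ (r₁ (l₂ x) * (s * m₂)) := by rw [hs, mul_assoc]
    _ = e₁ * l₁ (r₁ (l₂ x)) * l₁ (s * m₂) := by rw [map_mul, mul_assoc]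
    _ = l₂ x * (e₁ * l₁ (s * m₂)) := by rw [he₁, mul_assoc]

/-- Key product formula for the mates on the right-adjoint side. -/
lemma mate_right_prod (he₂ : ∀ c : B, e₂ * l₂ (r₂ c) = c * e₂)
    (hm₁ : ∀ a : A, m₁ * a = r₁ (l₁ a) * m₁)
    (ht₂ : e₂ * l₂ m₂ = 1)
    {t u : B} (ht : IsIntertwiner l₁ l₂ t) :
    (r₁ (e₂ * t) * m₁) * (r₂ (e₁ * u) * m₂) = r₁ (e₁ * (u * t)) * m₁ := by
  calc (r₁ (e₂ * t) * m₁) * (r₂ (e₁ * u) * m₂)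
      = r₁ (e₂ * t) * (m₁ * (r₂ (e₁ * u) * m₂)) := by rw [mul_assoc]
    _ = r₁ (e₂ * t) * (r₁ (l₁ (r₂ (e₁ * u) * m₂)) * m₁) := by rw [hm₁]
    _ = r₁ (e₂ * (t * l₁ (r₂ (e₁ * u) * m₂))) * m₁ := by
        simp only [map_mul]; noncomm_ring
    _ = r₁ (e₂ * (l₂ (r₂ (e₁ * u) * m₂) * t)) * m₁ := by rw [ht]
    _ = r₁ (e₂ * l₂ (r₂ (e₁ * u)) * (l₂ m₂ * t)) * m₁ := by
        simp only [map_mul]; noncomm_ring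
    _ = r₁ (e₁ * u * e₂ * (l₂ m₂ * t)) * m₁ := by rw [he₂]
    _ = r₁ (e₁ * u * (e₂ * l₂ m₂) * t) * m₁ := by
        simp only [map_mul]; noncomm_ring
    _ = r₁ (e₁ * (u * t)) * m₁ := by
        rw [ht₂, mul_one, mul_assoc]

/-- Key product formula for the mates on the left-adjoint side. -/
lemma mate_left_prod (he₁ : ∀ c : B, e₁ * l₁ (r₁ c) = c * e₁)
    (hm₂ : ∀ a : A, m₂ * a = r₂ (l₂ a) * m₂)
    (ht₂ : r₂ e₂ * m₂ = 1)
    {s : A} (u : A) (hs : IsIntertwiner r₂ r₁ s) :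
    (e₂ * l₂ (u * m₁)) * (e₁ * l₁ (s * m₂)) = e₁ * l₁ (s * u * m₁) := by
  have h0 : e₂ * l₂ (u * m₁) * e₁ = e₁ * l₁ (r₁ (e₂ * l₂ (u * m₁))) := (he₁ _).symm
  calc (e₂ * l₂ (u * m₁)) * (e₁ * l₁ (s * m₂))
      = (e₂ * l₂ (u * m₁) * e₁) * l₁ (s * m₂) := by noncomm_ring
    _ = e₁ * l₁ (r₁ (e₂ * l₂ (u * m₁)) * (s * m₂)) := by rw [h0, mul_assoc, ← map_mul]
    _ = e₁ * l₁ (s * r₂ (e₂ * l₂ (u * m₁)) * m₂) := by rw [← mul_assoc, ← hs]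
    _ = e₁ * l₁ (s * (r₂ e₂ * (r₂ (l₂ (u * m₁)) * m₂))) := by
        simp only [map_mul]; noncomm_ring
    _ = e₁ * l₁ (s * (r₂ e₂ * (m₂ * (u * m₁)))) := by rw [hm₂]
    _ = e₁ * l₁ (s * (r₂ e₂ * m₂ * (u * m₁))) := by rw [mul_assoc (r₂ e₂)]
    _ = e₁ * l₁ (s * u * m₁) := by
        rw [ht₂, one_mul, mul_assoc]

end Aux

/-- For two adjunctions `λ₁ ⊣ ρ₁` and `λ₂ ⊣ ρ₂`, one has `λ₁ ≤ λ₂` iff `ρ₁ ≤ ρ₂`. -/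
theorem stmt_3 {A B : Type*} [Ring A] [Ring B]
    (l₁ l₂ : A →+* B) (r₁ r₂ : B →+* A) (m₁ m₂ : A) (e₁ e₂ : B)
    (h₁ : IsRingAdjunction l₁ r₁ m₁ e₁) (h₂ : IsRingAdjunction l₂ r₂ m₂ e₂) :
    RingHomLE l₁ l₂ ↔ RingHomLE r₁ r₂ := by
  obtain ⟨he₁, hm₁, htr₁, htl₁⟩ := h₁
  obtain ⟨he₂, hm₂, htr₂, htl₂⟩ := h₂
  constructor
  · rintro ⟨n, b, a, hb, ha, hsum⟩
    refine ⟨n, fun i => r₂ (e₁ * a i) * m₂, fun i => r₁ (e₂ * b i) * m₁, ?_, ?_, ?_⟩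
    · intro i
      exact mate_right he₁ hm₂ (ha i)
    · intro i
      exact mate_right he₂ hm₁ (hb i)
    · calc (∑ i, (r₁ (e₂ * b i) * m₁) * (r₂ (e₁ * a i) * m₂))
          = ∑ i, r₁ (e₁ * (a i * b i)) * m₁ :=
            Finset.sum_congr rfl fun i _ => mate_right_prod he₂ hm₁ htl₂ (hb i)
        _ = r₁ (e₁ * ∑ i, a i * b i) * m₁ := by
            rw [Finset.mul_sum, map_sum, Finset.sum_mul]
        _ = 1 := by rw [hsum, mul_one, htr₁]
  · rintro ⟨n, b', a', hb', ha', hsum⟩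
    refine ⟨n, fun i => e₁ * l₁ (a' i * m₂), fun i => e₂ * l₂ (b' i * m₁), ?_, ?_, ?_⟩
    · intro i
      exact mate_left he₁ hm₂ (ha' i)
    · intro i
      exact mate_left he₂ hm₁ (hb' i)
    · calc (∑ i, (e₂ * l₂ (b' i * m₁)) * (e₁ * l₁ (a' i * m₂)))
          = ∑ i, e₁ * l₁ (a' i * b' i * m₁) :=
            Finset.sum_congr rfl fun i _ => mate_left_prod he₁ hm₂ htr₂ (b' i) (ha' i)
        _ = e₁ * l₁ ((∑ i, a' i * b' i) * m₁) := by
            rw [Finset.sum_mul, map_sum, Finset.mul_sum]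
        _ = 1 := by rw [hsum, one_mul, htl₁]
end

section
/- Let ρ, σ : A → B be parallel ring homomorphisms, R = Hom(ρ,ρ) and S = Hom(σ,σ) the intertwiner endomorphism rings (subrings of B), U = Hom(ρ,σ) the (S,R)-bimodule and V = Hom(σ,ρ) the (R,S)-bimodule, with all actions given by multiplication in B. If ρ ≤ σ, then V is finitely generated projective as a right S-module and U is finitely generated projective as a left S-module. -/
open MulOpposite

variable {A B : Type*} [Ring A] [Ring B]

/-- The additive group `Hom(α,β)` of intertwiners from `α` to `β`, as an additive
subgroup of `B`. -/
def IntwGrp (α β : A →+* B) : AddSubgroup B where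
  carrier := {t | IsIntertwiner α β t}
  add_mem' := by
    intro x y hx hy a
    simp only [add_mul, mul_add, hx a, hy a]
  zero_mem' := by intro a; simp
  neg_mem' := by
    intro x hx a
    simp only [neg_mul, mul_neg, hx a]

theorem mem_IntwGrp {α β : A →+* B} {t : B} :
    t ∈ IntwGrp α β ↔ IsIntertwiner α β t := Iff.rfl

/-- The intertwiner endomorphism ring `Hom(σ,σ)` as a subring of `B`. -/
def EndSubring (σ : A →+* B) : Subring B where
  carrier := {t | IsIntertwiner σ σ t}
  mul_mem' := by
    intro x y hx hy a
    rw [mul_assoc, hy a, ← mul_assoc, hx a, mul_assoc]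
  one_mem' := by intro a; rw [one_mul, mul_one]
  add_mem' := by
    intro x y hx hy a
    simp only [add_mul, mul_add, hx a, hy a]
  zero_mem' := by intro a; simp
  neg_mem' := by
    intro x hx a
    simp only [neg_mul, mul_neg, hx a]

theorem mem_EndSubring {σ : A →+* B} {t : B} :
    t ∈ EndSubring σ ↔ IsIntertwiner σ σ t := Iff.rfl

/-- `V = Hom(σ,ρ)` is a right module (i.e. a module over the opposite ring) over
`S = Hom(σ,σ)`, by multiplication in `B`. -/
instance (σ ρ : A →+* B) : SMul (EndSubring σ)ᵐᵒᵖ (IntwGrp σ ρ) :=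
  ⟨fun s v => ⟨(v : B) * (s.unop : B), by
    intro a
    rw [mul_assoc, (s.unop).2 a, ← mul_assoc, v.2 a, mul_assoc]⟩⟩

theorem opSmul_def (σ ρ : A →+* B) (s : (EndSubring σ)ᵐᵒᵖ) (v : IntwGrp σ ρ) :
    ((s • v : IntwGrp σ ρ) : B) = (v : B) * (s.unop : B) := rfl

instance (σ ρ : A →+* B) : Module (EndSubring σ)ᵐᵒᵖ (IntwGrp σ ρ) where
  one_smul v := by
    apply Subtype.ext
    simp [opSmul_def]
  mul_smul s t v := by
    apply Subtype.ext
    simp [opSmul_def, mul_assoc]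
  smul_zero s := by
    apply Subtype.ext
    simp [opSmul_def]
  smul_add s v w := by
    apply Subtype.ext
    simp [opSmul_def, add_mul]
  add_smul s t v := by
    apply Subtype.ext
    simp [opSmul_def, mul_add]
  zero_smul v := by
    apply Subtype.ext
    simp [opSmul_def]

/-- `U = Hom(ρ,σ)` is a left module over `S = Hom(σ,σ)`, by multiplication in `B`. -/
instance (σ ρ : A →+* B) : SMul (EndSubring σ) (IntwGrp ρ σ) :=
  ⟨fun s u => ⟨(s : B) * (u : B), by
    intro a
    rw [mul_assoc, u.2 a, ← mul_assoc, s.2 a, mul_assoc]⟩⟩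

theorem smul_def (σ ρ : A →+* B) (s : EndSubring σ) (u : IntwGrp ρ σ) :
    ((s • u : IntwGrp ρ σ) : B) = (s : B) * (u : B) := rfl

instance (σ ρ : A →+* B) : Module (EndSubring σ) (IntwGrp ρ σ) where
  one_smul u := by
    apply Subtype.ext
    simp [smul_def]
  mul_smul s t u := by
    apply Subtype.ext
    simp [smul_def, mul_assoc]
  smul_zero s := by
    apply Subtype.ext
    simp [smul_def]
  smul_add s u w := by
    apply Subtype.ext
    simp [smul_def, mul_add]
  add_smul s t u := by
    apply Subtype.ext
    simp [smul_def, add_mul]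
  zero_smul u := by
    apply Subtype.ext
    simp [smul_def]

set_option maxHeartbeats 1600000 in
set_option synthInstance.maxHeartbeats 400000 in
/-- If `ρ ≤ σ` then `V = Hom(σ,ρ)` is finitely generated projective as a right
`S`-module and `U = Hom(ρ,σ)` is finitely generated projective as a left `S`-module,
where `S = Hom(σ,σ)`. -/
theorem stmt_4 (ρ σ : A →+* B) (h : RingHomLE ρ σ) :
    (Module.Finite (EndSubring σ)ᵐᵒᵖ (IntwGrp σ ρ) ∧
      Module.Projective (EndSubring σ)ᵐᵒᵖ (IntwGrp σ ρ)) ∧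
    (Module.Finite (EndSubring σ) (IntwGrp ρ σ) ∧
      Module.Projective (EndSubring σ) (IntwGrp ρ σ)) := by
  obtain ⟨n, b, a, hb, ha, hsum⟩ := h
  set S := EndSubring σ
  -- membership lemmas
  have hbv : ∀ (i : Fin n) (v : IntwGrp σ ρ), (b i * (v : B)) ∈ S := by
    intro i v x
    rw [mul_assoc, v.2 x, ← mul_assoc, hb i x, mul_assoc]
  have hua : ∀ (u : IntwGrp ρ σ) (i : Fin n), ((u : B) * a i) ∈ S := by
    intro u i x
    rw [mul_assoc, ha i x, ← mul_assoc, u.2 x, mul_assoc]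
  -- V part
  let f : IntwGrp σ ρ →ₗ[Sᵐᵒᵖ] (Fin n → Sᵐᵒᵖ) :=
    { toFun := fun v i => op ⟨b i * (v : B), hbv i v⟩
      map_add' := by
        intro v w
        funext i
        refine unop_injective (Subtype.ext ?_)
        show b i * ((v : B) + (w : B)) = b i * (v : B) + b i * (w : B)
        rw [mul_add]
      map_smul' := by
        intro s v
        funext i
        refine unop_injective (Subtype.ext ?_)
        show b i * ((v : B) * ((s.unop : EndSubring σ) : B))
            = (b i * (v : B)) * ((s.unop : EndSubring σ) : B)
        rw [mul_assoc] }
  let g : (Fin n → Sᵐᵒᵖ) →ₗ[Sᵐᵒᵖ] IntwGrp σ ρ :=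
    { toFun := fun c => ∑ i, (c i) • (⟨a i, ha i⟩ : IntwGrp σ ρ)
      map_add' := by
        intro c d
        show (∑ i, (c + d) i • (⟨a i, ha i⟩ : IntwGrp σ ρ))
            = (∑ i, c i • (⟨a i, ha i⟩ : IntwGrp σ ρ))
            + (∑ i, d i • (⟨a i, ha i⟩ : IntwGrp σ ρ))
        rw [← Finset.sum_add_distrib]
        exact Finset.sum_congr rfl fun i _ => by rw [Pi.add_apply, add_smul]
      map_smul' := by
        intro s c
        show (∑ i, (s • c) i • (⟨a i, ha i⟩ : IntwGrp σ ρ))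
            = s • ∑ i, c i • (⟨a i, ha i⟩ : IntwGrp σ ρ)
        rw [Finset.smul_sum]
        exact Finset.sum_congr rfl fun i _ => by rw [Pi.smul_apply, smul_eq_mul, mul_smul] }
  have hgf : g.comp f = LinearMap.id := by
    ext v
    show ((∑ i, _ • (⟨a i, ha i⟩ : IntwGrp σ ρ) : IntwGrp σ ρ) : B) = (v : B)
    rw [AddSubmonoidClass.coe_finset_sum]
    calc (∑ i, ((op (⟨b i * (v : B), hbv i v⟩ : S) • (⟨a i, ha i⟩ : IntwGrp σ ρ) : IntwGrp σ ρ) : B))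
        = ∑ i, a i * (b i * (v : B)) := by
          exact Finset.sum_congr rfl fun i _ => rfl
      _ = (∑ i, a i * b i) * (v : B) := by
          rw [Finset.sum_mul]
          exact Finset.sum_congr rfl fun i _ => (mul_assoc _ _ _).symm
      _ = (v : B) := by rw [hsum, one_mul]
  have hgsurj : Function.Surjective g := fun v =>
    ⟨f v, congrArg (fun (h : _ →ₗ[Sᵐᵒᵖ] _) => h v) hgf⟩
  -- U part
  let f' : IntwGrp ρ σ →ₗ[S] (Fin n → S) :=
    { toFun := fun u i => ⟨(u : B) * a i, hua u i⟩
      map_add' := by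
        intro u w
        funext i
        refine Subtype.ext ?_
        show ((u : B) + (w : B)) * a i = (u : B) * a i + (w : B) * a i
        rw [add_mul]
      map_smul' := by
        intro s u
        funext i
        refine Subtype.ext ?_
        show ((s : B) * (u : B)) * a i = (s : B) * ((u : B) * a i)
        rw [mul_assoc] }
  let g' : (Fin n → S) →ₗ[S] IntwGrp ρ σ :=
    { toFun := fun c => ∑ i, (c i) • (⟨b i, hb i⟩ : IntwGrp ρ σ)
      map_add' := by
        intro c d
        show (∑ i, (c + d) i • (⟨b i, hb i⟩ : IntwGrp ρ σ))
            = (∑ i, c i • (⟨b i, hb i⟩ : IntwGrp ρ σ))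
            + (∑ i, d i • (⟨b i, hb i⟩ : IntwGrp ρ σ))
        rw [← Finset.sum_add_distrib]
        exact Finset.sum_congr rfl fun i _ => by rw [Pi.add_apply, add_smul]
      map_smul' := by
        intro s c
        show (∑ i, (s • c) i • (⟨b i, hb i⟩ : IntwGrp ρ σ))
            = s • ∑ i, c i • (⟨b i, hb i⟩ : IntwGrp ρ σ)
        rw [Finset.smul_sum]
        exact Finset.sum_congr rfl fun i _ => by rw [Pi.smul_apply, smul_eq_mul, mul_smul] }
  have hgf' : g'.comp f' = LinearMap.id := by
    ext u
    show ((∑ i, _ • (⟨b i, hb i⟩ : IntwGrp ρ σ) : IntwGrp ρ σ) : B) = (u : B)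
    rw [AddSubmonoidClass.coe_finset_sum]
    calc (∑ i, (((⟨(u : B) * a i, hua u i⟩ : S) • (⟨b i, hb i⟩ : IntwGrp ρ σ) : IntwGrp ρ σ) : B))
        = ∑ i, ((u : B) * a i) * b i := by
          exact Finset.sum_congr rfl fun i _ => rfl
      _ = (u : B) * ∑ i, a i * b i := by
          rw [Finset.mul_sum]
          exact Finset.sum_congr rfl fun i _ => mul_assoc _ _ _
      _ = (u : B) := by rw [hsum, mul_one]
  have hgsurj' : Function.Surjective g' := fun u =>
    ⟨f' u, congrArg (fun (h : _ →ₗ[S] _) => h u) hgf'⟩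
  exact ⟨⟨Module.Finite.of_surjective g hgsurj, Module.Projective.of_split f g hgf⟩,
    ⟨Module.Finite.of_surjective g' hgsurj', Module.Projective.of_split f' g' hgf'⟩⟩
end

section
/- Let ρ, σ : A → B be parallel ring homomorphisms, R = Hom(ρ,ρ) and S = Hom(σ,σ) the intertwiner endomorphism rings (subrings of B), and V = Hom(σ,ρ) the (R,S)-bimodule with actions given by multiplication in B. If ρ ≤ σ, then the map sending r ∈ R to the operator of left multiplication by r on V is a ring isomorphism from R onto the ring of right-S-module endomorphisms of V. -/
open MulOpposite

variable {A B : Type*} [Ring A] [Ring B]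

/-- If `ρ ≤ σ` then the map sending `r ∈ R = Hom(ρ,ρ)` to left multiplication by `r`
on `V = Hom(σ,ρ)` is a ring isomorphism from `R` onto the ring of right-`S`-module
endomorphisms of `V`, where `S = Hom(σ,σ)`. -/
theorem stmt_5 (ρ σ : A →+* B) (h : RingHomLE ρ σ) :
    ∃ φ : EndSubring ρ ≃+* Module.End (EndSubring σ)ᵐᵒᵖ (IntwGrp σ ρ),
      ∀ (r : EndSubring ρ) (v : IntwGrp σ ρ),
        ((φ r v : IntwGrp σ ρ) : B) = (r : B) * (v : B) := by
  classical
  obtain ⟨n, b, a, hb, ha, hsum⟩ := h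
  have hmem : ∀ (r : EndSubring ρ) (v : IntwGrp σ ρ), (r : B) * (v : B) ∈ IntwGrp σ ρ := by
    intro r v x
    rw [mul_assoc, v.2 x, ← mul_assoc, r.2 x, mul_assoc]
  let Φ : EndSubring ρ →+* Module.End (EndSubring σ)ᵐᵒᵖ (IntwGrp σ ρ) :=
    { toFun := fun r =>
        { toFun := fun v => ⟨(r : B) * (v : B), hmem r v⟩
          map_add' := fun v w => Subtype.ext (by simp [mul_add])
          map_smul' := fun s v => Subtype.ext (by
            simp only [opSmul_def, RingHom.id_apply]
            exact (mul_assoc _ _ _).symm) }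
      map_one' := LinearMap.ext fun v => Subtype.ext (by simp)
      map_mul' := fun r r' => LinearMap.ext fun v => Subtype.ext (by
        simp [mul_assoc])
      map_zero' := LinearMap.ext fun v => Subtype.ext (by simp)
      map_add' := fun r r' => LinearMap.ext fun v => Subtype.ext (by
        simp [add_mul]) }
  have hΦ : ∀ (r : EndSubring ρ) (v : IntwGrp σ ρ), ((Φ r v : IntwGrp σ ρ) : B) = (r : B) * (v : B) :=
    fun r v => rfl
  have hinj : Function.Injective Φ := by
    intro r r' hrr'
    apply Subtype.ext
    have key : ∀ i, (r : B) * a i = (r' : B) * a i := by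
      intro i
      have := congrArg (fun f : Module.End (EndSubring σ)ᵐᵒᵖ (IntwGrp σ ρ) =>
        ((f ⟨a i, ha i⟩ : IntwGrp σ ρ) : B)) hrr'
      simpa [hΦ] using this
    calc (r : B) = (r : B) * ∑ i, a i * b i := by rw [hsum, mul_one]
      _ = ∑ i, (r : B) * a i * b i := by rw [Finset.mul_sum]; simp [mul_assoc]
      _ = ∑ i, (r' : B) * a i * b i := by simp only [key]
      _ = (r' : B) * ∑ i, a i * b i := by rw [Finset.mul_sum]; simp [mul_assoc]
      _ = (r' : B) := by rw [hsum, mul_one]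
  have hsurj : Function.Surjective Φ := by
    intro f
    have hr0 : (∑ i, (f ⟨a i, ha i⟩ : B) * b i) ∈ EndSubring ρ := by
      intro x
      rw [Finset.sum_mul, Finset.mul_sum]
      refine Finset.sum_congr rfl fun i _ => ?_
      rw [mul_assoc, hb i x, ← mul_assoc, (f ⟨a i, ha i⟩).2 x, mul_assoc]
    refine ⟨⟨_, hr0⟩, ?_⟩
    apply LinearMap.ext
    intro v
    apply Subtype.ext
    rw [hΦ]
    have hs : ∀ i, IsIntertwiner σ σ (b i * (v : B)) := by
      intro i x
      rw [mul_assoc, v.2 x, ← mul_assoc, hb i x, mul_assoc]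
    have harg : (∑ i, (op (⟨b i * (v : B), hs i⟩ : EndSubring σ)) • (⟨a i, ha i⟩ : IntwGrp σ ρ)) = v := by
      apply Subtype.ext
      push_cast [opSmul_def]
      calc (∑ i, a i * (b i * (v : B))) = (∑ i, a i * b i) * (v : B) := by
            rw [Finset.sum_mul]; simp [mul_assoc]
        _ = (v : B) := by rw [hsum, one_mul]
    calc ((∑ i, (f ⟨a i, ha i⟩ : B) * b i) : B) * (v : B)
        = ∑ i, (f ⟨a i, ha i⟩ : B) * (b i * (v : B)) := by
          rw [Finset.sum_mul]; simp [mul_assoc]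
      _ = ∑ i, (((op (⟨b i * (v : B), hs i⟩ : EndSubring σ)) • f ⟨a i, ha i⟩ : IntwGrp σ ρ) : B) := by
          simp [opSmul_def]
      _ = ((∑ i, (op (⟨b i * (v : B), hs i⟩ : EndSubring σ)) • f ⟨a i, ha i⟩ : IntwGrp σ ρ) : B) := by
          push_cast; ring
      _ = ((f (∑ i, (op (⟨b i * (v : B), hs i⟩ : EndSubring σ)) • (⟨a i, ha i⟩ : IntwGrp σ ρ)) : IntwGrp σ ρ) : B) := by
          rw [map_sum]; simp only [map_smul]
      _ = ((f v : IntwGrp σ ρ) : B) := by rw [harg]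
  exact ⟨RingEquiv.ofBijective Φ ⟨hinj, hsurj⟩, hΦ⟩
end

section
/- Let I be a small category with binary coproducts and X : I → AddCommGrp an additive-group-valued functor. If c is a cocone over X whose image under the forgetful functor to Set is a colimit cocone of the underlying Set-valued functor, then c itself is a colimit cocone in the category of abelian groups. Equivalently, the forgetful functor from abelian groups to sets creates colimits of shape I. -/
open CategoryTheory CategoryTheory.Limits

universe u v

section Aux

variable {I : Type u} [SmallCategory I] [HasBinaryCoproducts I]

omit [HasBinaryCoproducts I] in
lemma ι_nat {F : I ⥤ Type v} (t : Cocone F) {i j : I} (f : i ⟶ j) (a : F.obj i) :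
    t.ι.app j (F.map f a) = t.ι.app i a := types_congr_hom (t.w f) a

omit [HasBinaryCoproducts I] in
lemma map_map (K : I ⥤ AddCommGrpCat.{v}) {i j k : I} (f : i ⟶ j) (g : j ⟶ k) (a : K.obj i) :
    K.map g (K.map f a) = K.map (f ≫ g) a := by rw [K.map_comp]; rfl

variable (K : I ⥤ AddCommGrpCat.{v}) {t : Cocone (K ⋙ forget AddCommGrpCat.{v})} (ht : IsColimit t)

lemma ι_natG (t : Cocone (K ⋙ forget AddCommGrpCat.{v})) {i j : I} (f : i ⟶ j) (a : K.obj i) :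
    t.ι.app j (K.map f a) = t.ι.app i a := types_congr_hom (t.w f) a

lemma map_coprod_add_right {i j j' : I} (f : j ⟶ j') (a : K.obj i) (b : K.obj j) :
    K.map (coprod.map (𝟙 i) f) (K.map coprod.inl a + K.map coprod.inr b) =
      K.map coprod.inl a + K.map coprod.inr (K.map f b) := by
  rw [(K.map _).hom.map_add, map_map, map_map, coprod.inl_map, coprod.inr_map, Category.id_comp,
    ← map_map]

lemma map_coprod_add_left {i i' j : I} (f : i ⟶ i') (a : K.obj i) (b : K.obj j) :
    K.map (coprod.map f (𝟙 j)) (K.map coprod.inl a + K.map coprod.inr b) =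
      K.map coprod.inl (K.map f a) + K.map coprod.inr b := by
  rw [(K.map _).hom.map_add, map_map, map_map, coprod.inl_map, coprod.inr_map, Category.id_comp,
    ← map_map]

/-- Auxiliary addition map. -/
noncomputable def addAux (i : I) (a : K.obj i) : t.pt → t.pt :=
  ht.desc
    { pt := t.pt
      ι :=
        { app := fun j => TypeCat.ofHom fun b => t.ι.app (i ⨿ j) (K.map coprod.inl a + K.map coprod.inr b)
          naturality := fun j j' f => by
            refine ConcreteCategory.hom_ext _ _ fun b => ?_
            show t.ι.app (i ⨿ j') (K.map coprod.inl a + K.map coprod.inr (K.map f b)) = _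
            rw [← map_coprod_add_right K f a b, ι_natG K t]
            rfl } }

lemma addAux_apply (i : I) (a : K.obj i) (j : I) (b : K.obj j) :
    addAux K ht i a (t.ι.app j b) =
      t.ι.app (i ⨿ j) (K.map coprod.inl a + K.map coprod.inr b) :=
  types_congr_hom (ht.fac _ j) b

lemma addAux_nat {i i' : I} (f : i ⟶ i') (a : K.obj i) :
    addAux K ht i' (K.map f a) = addAux K ht i a := by
  funext x
  obtain ⟨j, b, rfl⟩ := Types.jointly_surjective_of_isColimit ht x
  rw [addAux_apply, addAux_apply]
  rw [← map_coprod_add_left K f a b, ι_natG K t]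

/-- The addition on the colimit. -/
noncomputable def addT : t.pt → t.pt → t.pt :=
  ht.desc
    { pt := t.pt → t.pt
      ι :=
        { app := fun i => TypeCat.ofHom fun a => addAux K ht i a
          naturality := fun i i' f => by
            refine ConcreteCategory.hom_ext _ _ fun a => ?_
            exact addAux_nat K ht f a } }

lemma addT_apply (i : I) (a : K.obj i) (j : I) (b : K.obj j) :
    addT K ht (t.ι.app i a) (t.ι.app j b) =
      t.ι.app (i ⨿ j) (K.map coprod.inl a + K.map coprod.inr b) := by
  have h : addT K ht (t.ι.app i a) = addAux K ht i a := types_congr_hom (ht.fac _ i) a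
  rw [h, addAux_apply]

lemma addT_same (i : I) (a b : K.obj i) :
    addT K ht (t.ι.app i a) (t.ι.app i b) = t.ι.app i (a + b) := by
  rw [addT_apply]
  have h1 : K.map (coprod.desc (𝟙 i) (𝟙 i)) (K.map coprod.inl a + K.map coprod.inr b)
      = a + b := by
    rw [(K.map _).hom.map_add, map_map, map_map, coprod.inl_desc, coprod.inr_desc, K.map_id]
    rfl
  rw [← h1, ι_natG K t]

/-- The negation on the colimit. -/
noncomputable def negT : t.pt → t.pt :=
  ht.desc
    { pt := t.pt
      ι :=
        { app := fun j => TypeCat.ofHom fun b => t.ι.app j (-b)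
          naturality := fun j j' f => by
            refine ConcreteCategory.hom_ext _ _ fun b => ?_
            show t.ι.app j' (-(K.map f b)) = _
            rw [← (K.map f).hom.map_neg, ι_natG K t]
            rfl } }

lemma negT_apply (j : I) (b : K.obj j) : negT K ht (t.ι.app j b) = t.ι.app j (-b) :=
  types_congr_hom (ht.fac _ j) b

/-- The zero element of the colimit. -/
noncomputable def zeroT [Nonempty I] (t : Cocone (K ⋙ forget AddCommGrpCat.{v})) : t.pt :=
  t.ι.app (Classical.arbitrary I) 0

lemma zeroT_eq [Nonempty I] (t : Cocone (K ⋙ forget AddCommGrpCat.{v})) (i : I) :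
    zeroT K t = t.ι.app i 0 := by
  set i0 := Classical.arbitrary I
  have h1 : t.ι.app i0 (0 : K.obj i0) = t.ι.app (i0 ⨿ i) 0 := by
    have := ι_natG K t (coprod.inl : i0 ⟶ i0 ⨿ i) 0; rw [map_zero] at this; exact this.symm
  have h2 : t.ι.app i (0 : K.obj i) = t.ι.app (i0 ⨿ i) 0 := by
    have := ι_natG K t (coprod.inr : i ⟶ i0 ⨿ i) 0; rw [map_zero] at this; exact this.symm
  exact h1.trans h2.symm

lemma exists_rep2 {F : I ⥤ Type v} {t : Cocone F} (ht : IsColimit t) (x y : t.pt) :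
    ∃ i a b, t.ι.app i a = x ∧ t.ι.app i b = y := by
  obtain ⟨i, a, rfl⟩ := Types.jointly_surjective_of_isColimit ht x
  obtain ⟨j, b, rfl⟩ := Types.jointly_surjective_of_isColimit ht y
  exact ⟨i ⨿ j, F.map coprod.inl a, F.map coprod.inr b, ι_nat t _ a, ι_nat t _ b⟩

lemma exists_rep3 {F : I ⥤ Type v} {t : Cocone F} (ht : IsColimit t) (x y z : t.pt) :
    ∃ i a b c, t.ι.app i a = x ∧ t.ι.app i b = y ∧ t.ι.app i c = z := by
  obtain ⟨i, a, b, rfl, rfl⟩ := exists_rep2 ht x y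
  obtain ⟨j, c, rfl⟩ := Types.jointly_surjective_of_isColimit ht z
  exact ⟨i ⨿ j, F.map coprod.inl a, F.map coprod.inl b, F.map coprod.inr c,
    ι_nat t _ a, ι_nat t _ b, ι_nat t _ c⟩

/-- The group structure on the colimit. -/
noncomputable def colimAddCommGroup [Nonempty I] : AddCommGroup t.pt :=
  letI : Add t.pt := ⟨addT K ht⟩
  letI : Zero t.pt := ⟨zeroT K t⟩
  letI : Neg t.pt := ⟨negT K ht⟩
  { add := (· + ·)
    zero := (0 : t.pt)
    neg := Neg.neg
    nsmul := nsmulRec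
    zsmul := zsmulRec
    add_assoc := fun x y z => by
      obtain ⟨i, a, b, c, rfl, rfl, rfl⟩ := exists_rep3 ht x y z
      show addT K ht (addT K ht _ _) _ = addT K ht _ (addT K ht _ _)
      rw [addT_same, addT_same, addT_same, addT_same, add_assoc]
    zero_add := fun x => by
      obtain ⟨i, a, rfl⟩ := Types.jointly_surjective_of_isColimit ht x
      show addT K ht (zeroT K t) (t.ι.app i a) = t.ι.app i a
      rw [zeroT_eq K t i, addT_same]; exact congrArg _ (zero_add a)
    add_zero := fun x => by
      obtain ⟨i, a, rfl⟩ := Types.jointly_surjective_of_isColimit ht x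
      show addT K ht (t.ι.app i a) (zeroT K t) = t.ι.app i a
      rw [zeroT_eq K t i, addT_same]; exact congrArg _ (add_zero a)
    neg_add_cancel := fun x => by
      obtain ⟨i, a, rfl⟩ := Types.jointly_surjective_of_isColimit ht x
      show addT K ht (negT K ht (t.ι.app i a)) (t.ι.app i a) = zeroT K t
      rw [negT_apply, addT_same, neg_add_cancel]; exact (zeroT_eq K t i).symm
    add_comm := fun x y => by
      obtain ⟨i, a, b, rfl, rfl⟩ := exists_rep2 ht x y
      show addT K ht _ _ = addT K ht _ _
      rw [addT_same, addT_same, add_comm] }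


/-- Key lemma: a cocone in `AddCommGrpCat` whose underlying cocone of types is a colimit
is itself a colimit. -/
noncomputable def isColimitOfForget (K : I ⥤ AddCommGrpCat.{v}) (c : Cocone K)
    (h : IsColimit ((forget AddCommGrpCat.{v}).mapCocone c)) : IsColimit c where
  desc s := AddCommGrpCat.ofHom <| AddMonoidHom.mk' (h.desc ((forget AddCommGrpCat).mapCocone s)) (by
    intro x y
    obtain ⟨i, a, b, ha, hb⟩ :=
      exists_rep2 h (x : ((forget AddCommGrpCat).mapCocone c).pt) y
    have hx : x = c.ι.app i a := ha.symm
    have hy : y = c.ι.app i b := hb.symm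
    subst hx; subst hy
    have hs : ∀ (z : K.obj i),
        h.desc ((forget AddCommGrpCat).mapCocone s) (c.ι.app i z) = s.ι.app i z :=
      fun z => types_congr_hom (h.fac ((forget AddCommGrpCat).mapCocone s) i) z
    have hadd := (c.ι.app i).hom.map_add a b
    rw [← hadd, hs, hs, hs, map_add])
  fac s i := by
    ext z
    exact types_congr_hom (h.fac ((forget AddCommGrpCat).mapCocone s) i) z
  uniq s m w := by
    ext z
    have := h.uniq ((forget AddCommGrpCat).mapCocone s) ((forget AddCommGrpCat).map m)
      (fun i => by simp only [Functor.mapCocone_ι_app, ← Functor.map_comp, w i]; rw [← w i]; rfl)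
    exact types_congr_hom this z

/-- The lifted cocone over `K` obtained by putting a group structure on the type colimit. -/
noncomputable def liftedCoconeAux [Nonempty I] : Cocone K :=
  letI : AddCommGroup t.pt := colimAddCommGroup K ht
  { pt := AddCommGrpCat.of t.pt
    ι :=
      { app := fun i => AddCommGrpCat.ofHom <| AddMonoidHom.mk' (t.ι.app i) (fun a b => (addT_same K ht i a b).symm)
        naturality := fun i j f => by
          ext b
          show t.ι.app j (K.map f b) = _
          rw [ι_natG K t]
          rfl } }

/-- The lifted cocone maps to `t`. -/
noncomputable def validLiftAux [Nonempty I] :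
    (forget AddCommGrpCat.{v}).mapCocone (liftedCoconeAux K ht) ≅ t :=
  Cocones.ext (Iso.refl _) (fun i => by exact ConcreteCategory.hom_ext _ _ fun x => rfl)

/-- `t` lifts to a colimit cocone over `K`. -/
noncomputable def liftAux [Nonempty I] : LiftsToColimit K (forget AddCommGrpCat.{v}) t ht where
  liftedCocone := liftedCoconeAux K ht
  validLift := validLiftAux K ht
  makesColimit :=
    isColimitOfForget K _ (IsColimit.ofIsoColimit ht (validLiftAux K ht).symm)

end Aux

/-- The forgetful functor creates colimits of shape `I`. -/
noncomputable def createsAux (I : Type u) [SmallCategory I] [HasBinaryCoproducts I] [Nonempty I] :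
    CreatesColimitsOfShape I (forget AddCommGrpCat.{v}) where
  CreatesColimit {K} := createsColimitOfReflectsIso fun c' t' => liftAux K t'

/-- Let `I` be a small category with binary coproducts and `X : I ⥤ AddCommGrpCat`.
If `c` is a cocone over `X` whose image under the forgetful functor to `Set` is a
colimit cocone, then `c` is itself a colimit cocone in `AddCommGrpCat`; equivalently,
the forgetful functor from abelian groups to sets creates colimits of shape `I`. -/
theorem stmt_8 (I : Type u) [SmallCategory I] [HasBinaryCoproducts I]
    (X : I ⥤ AddCommGrpCat.{v}) (c : Cocone X)
    (h : IsColimit ((forget AddCommGrpCat.{v}).mapCocone c)) :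
    Nonempty (IsColimit c) ∧
      Nonempty (CreatesColimitsOfShape I (forget AddCommGrpCat.{v})) := by
  have hne : Nonempty I := by
    by_contra hn
    rw [not_nonempty_iff] at hn
    let D : Cocone (X ⋙ forget AddCommGrpCat.{v}) :=
      { pt := PEmpty.{v + 1}
        ι := { app := fun i => (hn.false i).elim
               naturality := fun i => (hn.false i).elim } }
    exact (h.desc D ((0 : c.pt) : ((forget AddCommGrpCat.{v}).mapCocone c).pt)).elim
  exact ⟨⟨isColimitOfForget X c h⟩, ⟨createsAux I⟩⟩
end

section
/- Let (γ, d, e) be a comonoid in the endomorphism category of a ring B. Then: (i) the operation b₁ ⋆ b₂ = b₁·γ(b₂)·d is associative on B with two-sided unit e, so B_γ = (B, ⋆, e) is a ring; (ii) ρ_γ : B → B_γ, b ↦ b·e, is a ring homomorphism; (iii) λ_γ : B_γ → B, b ↦ γ(b)·d, is a ring homomorphism; (iv) λ_γ(ρ_γ(b)) = γ(b) for all b ∈ B; (v) the element m = 1_B of B_γ and the element e of B form the unit and counit of an adjunction λ_γ ⊣ ρ_γ in the 2-category of rings, i.e. ρ_γ(λ_γ(b')) ⋆ m = m ⋆ b'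 for all b' ∈ B_γ, e·λ_γ(ρ_γ(b)) = b·e for all b ∈ B, ρ_γ(e) ⋆ m = e, and e·λ_γ(m) = 1_B. -/
variable {B : Type*} [Ring B]

/-- `(γ, d, e)` is a comonoid in the endomorphism category of the ring `B`:
`d : γ → γ²` and `e : γ → id` are intertwiners satisfying coassociativity and
the counit laws. -/
def IsComonoid (γ : B →+* B) (d e : B) : Prop :=
  (∀ b : B, d * γ b = γ (γ b) * d) ∧ (∀ b : B, e * γ b = b * e) ∧
    γ d * d = d * d ∧ e * d = 1 ∧ γ e * d = 1

/-- The Kleisli multiplication `b₁ ⋆ b₂ = b₁·γ(b₂)·d` on `B`. -/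
def kstar (γ : B →+* B) (d b₁ b₂ : B) : B := b₁ * γ b₂ * d

/-- For a comonoid `(γ, d, e)` in the endomorphism category of `B`:
(i) `⋆` is associative with two-sided unit `e` (and distributes over addition), so
`B_γ = (B, ⋆, e)` is a ring; (ii) `ρ_γ : b ↦ b·e` is a ring homomorphism `B → B_γ`;
(iii) `λ_γ : b ↦ γ(b)·d` is a ring homomorphism `B_γ → B`; (iv) `λ_γ∘ρ_γ = γ`;
(v) `m = 1_B ∈ B_γ` and `e ∈ B` are the unit and counit of an adjunction `λ_γ ⊣ ρ_γ`. -/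
theorem stmt_10 (γ : B →+* B) (d e : B) (h : IsComonoid γ d e) :
    -- (i) `B_γ = (B, ⋆, e)` is a ring
    (∀ b₁ b₂ b₃ : B, kstar γ d (kstar γ d b₁ b₂) b₃ = kstar γ d b₁ (kstar γ d b₂ b₃)) ∧
    (∀ b : B, kstar γ d e b = b ∧ kstar γ d b e = b) ∧
    (∀ b₁ b₂ b₃ : B, kstar γ d b₁ (b₂ + b₃) = kstar γ d b₁ b₂ + kstar γ d b₁ b₃) ∧
    (∀ b₁ b₂ b₃ : B, kstar γ d (b₁ + b₂) b₃ = kstar γ d b₁ b₃ + kstar γ d b₂ b₃) ∧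
    -- (ii) `ρ_γ : b ↦ b·e` is a ring homomorphism `B → B_γ`
    (∀ b₁ b₂ : B, (b₁ * b₂) * e = kstar γ d (b₁ * e) (b₂ * e)) ∧
    ((1 : B) * e = e) ∧
    -- (iii) `λ_γ : b ↦ γ(b)·d` is a ring homomorphism `B_γ → B`
    (∀ b₁ b₂ : B, γ (kstar γ d b₁ b₂) * d = (γ b₁ * d) * (γ b₂ * d)) ∧
    (γ e * d = 1) ∧
    -- (iv) `λ_γ(ρ_γ(b)) = γ(b)`
    (∀ b : B, γ (b * e) * d = γ b) ∧
    -- (v) the adjunction `λ_γ ⊣ ρ_γ` with unit `m = 1_B` and counit `e`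
    (∀ b' : B, kstar γ d ((γ b' * d) * e) 1 = kstar γ d 1 b') ∧
    (∀ b : B, e * (γ (b * e) * d) = b * e) ∧
    (kstar γ d (e * e) 1 = e) ∧
    (e * (γ 1 * d) = 1) := by
  obtain ⟨hd, he, hcoass, hcu1, hcu2⟩ := h
  refine ⟨?_, ?_, ?_, ?_, ?_, ?_, ?_, hcu2, ?_, ?_, ?_, ?_, ?_⟩
  · intro b₁ b₂ b₃
    simp only [kstar, map_mul]
    calc b₁ * γ b₂ * d * γ b₃ * d = b₁ * γ b₂ * (d * γ b₃) * d := by noncomm_ring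
      _ = b₁ * γ b₂ * (γ (γ b₃) * d) * d := by rw [hd]
      _ = b₁ * γ b₂ * γ (γ b₃) * (d * d) := by noncomm_ring
      _ = b₁ * γ b₂ * γ (γ b₃) * (γ d * d) := by rw [hcoass]
      _ = b₁ * (γ b₂ * γ (γ b₃) * γ d) * d := by noncomm_ring
  · intro b
    constructor
    · simp only [kstar]; rw [he, mul_assoc, hcu1, mul_one]
    · simp only [kstar]; rw [mul_assoc, hcu2, mul_one]
  · intro b₁ b₂ b₃; simp only [kstar, map_add]; noncomm_ring
  · intro b₁ b₂ b₃; simp only [kstar]; noncomm_ring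
  · intro b₁ b₂
    simp only [kstar, map_mul]
    symm
    calc b₁ * e * (γ b₂ * γ e) * d = b₁ * (e * γ b₂) * γ e * d := by noncomm_ring
      _ = b₁ * (b₂ * e) * γ e * d := by rw [he b₂]
      _ = b₁ * b₂ * (e * γ e) * d := by noncomm_ring
      _ = b₁ * b₂ * (e * e) * d := by rw [he e]
      _ = b₁ * b₂ * e * (e * d) := by noncomm_ring
      _ = b₁ * b₂ * e := by rw [hcu1, mul_one]
  · exact one_mul e
  · intro b₁ b₂
    simp only [kstar, map_mul]
    calc γ b₁ * γ (γ b₂) * γ d * d = γ b₁ * γ (γ b₂) * (γ d * d) := by noncomm_ring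
      _ = γ b₁ * γ (γ b₂) * (d * d) := by rw [hcoass]
      _ = γ b₁ * (γ (γ b₂) * d) * d := by noncomm_ring
      _ = γ b₁ * (d * γ b₂) * d := by rw [hd]
      _ = γ b₁ * d * (γ b₂ * d) := by noncomm_ring
  · intro b; rw [map_mul, mul_assoc, hcu2, mul_one]
  · intro b'
    simp only [kstar, map_one, mul_one, one_mul]
    rw [mul_assoc (γ b' * d), hcu1, mul_one]
  · intro b; rw [map_mul, mul_assoc, hcu2, mul_one, he]
  · simp only [kstar, map_one, mul_one]
    rw [mul_assoc, hcu1, mul_one]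
  · rw [map_one, one_mul, hcu1]
end

section
/- Let ρ : B → A be a ring homomorphism and suppose f : B → A is an additive bijection satisfying f(b'·b) = ρ(b')·f(b) for all b, b' ∈ B (an isomorphism of left B-modules, where B acts on A via ρ). Set m = f(1_B), e = f⁻¹(1_A), and define λ : A → B by λ(a) = f⁻¹(m·a). Then λ is a ring homomorphism, (m, e) is the unit and counit of an adjunction λ ⊣ ρ in the 2-category of rings, and f(b) = ρ(b)·m for all b ∈ B. -/
/-- Let `ρ : B → A` be a ring homomorphism and `f : B → A` an additive bijection
with `f(b'·b) = ρ(b')·f(b)` (an isomorphism of left `B`-modules `B ≅ A`). Setting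
`m = f(1)`, `e = f⁻¹(1)` and `λ(a) = f⁻¹(m·a)`, the map `λ` is a ring homomorphism,
`(m, e)` is the unit and counit of an adjunction `λ ⊣ ρ` in the 2-category of rings,
and `f(b) = ρ(b)·m` for all `b`. -/
theorem stmt_12 {A B : Type*} [Ring A] [Ring B]
    (ρ : B →+* A) (f : B ≃+ A) (hf : ∀ b b' : B, f (b' * b) = ρ b' * f b) :
    -- `λ : a ↦ f⁻¹(m·a)` is a ring homomorphism
    (∀ a a' : A, f.symm (f 1 * (a * a')) = f.symm (f 1 * a) * f.symm (f 1 * a')) ∧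
    (f.symm (f 1 * 1) = 1) ∧
    (∀ a a' : A, f.symm (f 1 * (a + a')) = f.symm (f 1 * a) + f.symm (f 1 * a')) ∧
    -- `e = f⁻¹(1)` is a counit intertwiner `λ∘ρ → id_B`
    (∀ b : B, f.symm 1 * f.symm (f 1 * ρ b) = b * f.symm 1) ∧
    -- `m = f(1)` is a unit intertwiner `id_A → ρ∘λ`
    (∀ a : A, f 1 * a = ρ (f.symm (f 1 * a)) * f 1) ∧
    -- triangle identities
    (ρ (f.symm 1) * f 1 = 1) ∧
    (f.symm 1 * f.symm (f 1 * f 1) = 1) ∧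
    -- `f(b) = ρ(b)·m`
    (∀ b : B, f b = ρ b * f 1) := by
  have key : ∀ b : B, f b = ρ b * f 1 := fun b => by simpa using hf 1 b
  have hsymm : ∀ (b : B) (a : A), f.symm (ρ b * a) = b * f.symm a := by
    intro b a
    apply f.injective
    rw [f.apply_symm_apply, hf, f.apply_symm_apply]
  have hρe : ρ (f.symm 1) * f 1 = 1 := by
    have := key (f.symm 1)
    rw [f.apply_symm_apply] at this
    exact this.symm
  have unit : ∀ a : A, f 1 * a = ρ (f.symm (f 1 * a)) * f 1 := by
    intro a
    have := key (f.symm (f 1 * a)); rwa [f.apply_symm_apply] at this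
  refine ⟨?_, ?_, ?_, ?_, unit, hρe, ?_, key⟩
  · intro a a'
    apply f.injective
    rw [f.apply_symm_apply, hf, f.apply_symm_apply]
    conv_lhs => rw [← mul_assoc, unit a, mul_assoc]
  · simpa using f.symm_apply_apply 1
  · intro a a'
    rw [mul_add, map_add]
  · intro b
    apply f.injective
    rw [hf, f.apply_symm_apply, hf, f.apply_symm_apply, ← mul_assoc, hρe, one_mul, mul_one]
  · apply f.injective
    rw [hf, f.apply_symm_apply, ← mul_assoc, hρe, one_mul]
end

section
/- For a ring homomorphism ρ : B → A the following conditions are equivalent: (i) ρ is right adjoint in the 2-category of rings, i.e. there exist a ring homomorphism λ : A → B and elements m ∈ A, e ∈ B forming an adjunction λ ⊣ ρ; (ii) A is isomorphic to B as a left B-module, i.e. there exists an additive bijection f : B → A with f(b'·b) = ρ(b')·f(b) for all b, b' ∈ B. -/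
/-- For a ring homomorphism `ρ : B → A` the following are equivalent:
(i) `ρ` is right adjoint in the 2-category of rings;
(ii) `A ≅ B` as left `B`-modules, i.e. there is an additive bijection `f : B → A`
with `f(b'·b) = ρ(b')·f(b)`. -/
theorem stmt_13 {A B : Type*} [Ring A] [Ring B] (ρ : B →+* A) :
    (∃ (l : A →+* B) (m : A) (e : B), IsRingAdjunction l ρ m e) ↔
      (∃ f : B ≃+ A, ∀ b b' : B, f (b' * b) = ρ b' * f b) := by
  constructor
  · rintro ⟨l, m, e, he, hm, h1, h2⟩
    refine ⟨{ toFun := fun b => ρ b * m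
              invFun := fun a => e * l a
              left_inv := fun b => ?_
              right_inv := fun a => ?_
              map_add' := fun b b' => ?_ }, fun b b' => ?_⟩
    · calc e * l (ρ b * m) = (e * l (ρ b)) * l m := by rw [map_mul, mul_assoc]
        _ = b * (e * l m) := by rw [he b, mul_assoc]
        _ = b := by rw [h2, mul_one]
    · calc ρ (e * l a) * m = ρ e * (ρ (l a) * m) := by rw [map_mul, mul_assoc]
        _ = (ρ e * m) * a := by rw [← hm a, mul_assoc]
        _ = a := by rw [h1, one_mul]
    · simp [add_mul]
    · simp [map_mul, mul_assoc]
  · rintro ⟨f, hf⟩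
    set m := f 1 with hmdef
    have hfb : ∀ b : B, f b = ρ b * m := fun b => by
      have := hf 1 b; simpa using this
    have key : ∀ x : B, ρ x * m = f x := fun x => (hfb x).symm
    refine ⟨{ toFun := fun a => f.symm (m * a)
              map_one' := ?_
              map_mul' := fun a a' => ?_
              map_zero' := ?_
              map_add' := fun a a' => ?_ }, m, f.symm 1, ?_, ?_, ?_, ?_⟩
    · show f.symm (m * 1) = 1
      rw [mul_one, hmdef, f.symm_apply_apply]
    · apply f.injective
      rw [f.apply_symm_apply, hf]
      rw [f.apply_symm_apply]
      have : ρ (f.symm (m * a)) * m = m * a := by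
        rw [key, f.apply_symm_apply]
      calc m * (a * a') = (ρ (f.symm (m * a)) * m) * a' := by rw [this, mul_assoc]
        _ = ρ (f.symm (m * a)) * (m * a') := by rw [mul_assoc]
    · simp
    · simp [mul_add]
    · -- counit naturality
      intro b
      apply f.injective
      simp only [RingHom.coe_mk, MonoidHom.coe_mk, OneHom.coe_mk]
      rw [hf, f.apply_symm_apply, hf]
      have h1 : ρ (f.symm (1 : A)) * m = 1 := by rw [key, f.apply_symm_apply]
      rw [f.apply_symm_apply, ← mul_assoc, h1, one_mul, mul_one]
    · -- unit naturality
      intro a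
      simp only [RingHom.coe_mk, MonoidHom.coe_mk, OneHom.coe_mk]
      rw [key, f.apply_symm_apply]
    · -- triangle 1
      rw [key, f.apply_symm_apply]
    · -- triangle 2
      apply f.injective
      simp only [RingHom.coe_mk, MonoidHom.coe_mk, OneHom.coe_mk]
      rw [hf, f.apply_symm_apply]
      have h1 : ρ (f.symm (1 : A)) * m = 1 := by rw [key, f.apply_symm_apply]
      rw [← mul_assoc, h1, one_mul]
end

section
/- Let (m, e) : λ ⊣ ρ be an adjunction in the 2-category of rings, with λ : A → B and ρ : B → A. Regard A as a right B-module via a·b = a·ρ(b) and as a left B-module via b·a = ρ(b)·a, and form the tensor product A ⊗_B A. Then the additive map ϑ : A ⊗_B A → A determined by ϑ(a' ⊗ a) = a'·ρ(e·λ(a)) is bijective with inverse a ↦ a ⊗ m; moreover ϑ is left A-linear (ϑ(a''·a' ⊗ a) = a''·ϑ(a' ⊗ a)) and satisfies ϑ(a' ⊗ a·ρ(b)) = ϑ(a' ⊗ a)·ρ(λ(ρ(b))) for all a, a', a'' ∈ A and b ∈ B. -/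
open TensorProduct

/-- The subgroup of `A ⊗_ℤ A` generated by the balancing relations for the tensor
product `A ⊗_B A` over `B`, with the right `B`-action `a·b = a·ρ(b)` and the left
`B`-action `b·a = ρ(b)·a` on `A`. -/
noncomputable def balancedRel {A B : Type*} [Ring A] [Ring B] (ρ : B →+* A) :
    AddSubgroup (A ⊗[ℤ] A) :=
  AddSubgroup.closure
    {z | ∃ (a' a : A) (b : B), z = (a' * ρ b) ⊗ₜ[ℤ] a - a' ⊗ₜ[ℤ] (ρ b * a)}

section Aux

variable {A B : Type*} [Ring A] [Ring B]
  (l : A →+* B) (r : B →+* A) (m : A) (e : B)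

/-- The bilinear map `(a', a) ↦ a' * r (e * l a)` as an iterated `AddMonoidHom`. -/
noncomputable def thetaBil : A →+ A →+ A :=
  AddMonoidHom.mk' (fun a' =>
    AddMonoidHom.mk' (fun a => a' * r (e * l a)) (by
      intro x y
      simp [map_add, mul_add]))
    (by
      intro x y
      ext a
      simp [add_mul])

@[simp] lemma thetaBil_apply (a' a : A) :
    thetaBil l r e a' a = a' * r (e * l a) := rfl

/-- `ϑ` on `A ⊗[ℤ] A`. -/
noncomputable def theta0 : A ⊗[ℤ] A →+ A :=
  TensorProduct.liftAddHom (thetaBil l r e) (by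
    intro n x y
    show (n • x) * r (e * l y) = x * r (e * l (n • y))
    rw [smul_mul_assoc, map_zsmul l, mul_smul_comm, map_zsmul r, mul_smul_comm])

@[simp] lemma theta0_tmul (a' a : A) :
    theta0 l r e (a' ⊗ₜ[ℤ] a) = a' * r (e * l a) := rfl

lemma mem_balancedRel (a' a : A) (b : B) :
    (a' * r b) ⊗ₜ[ℤ] a - a' ⊗ₜ[ℤ] (r b * a) ∈ balancedRel r :=
  AddSubgroup.subset_closure ⟨a', a, b, rfl⟩

lemma mk_rel (a' a : A) (b : B) :
    (QuotientAddGroup.mk ((a' * r b) ⊗ₜ[ℤ] a) :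
        (A ⊗[ℤ] A) ⧸ balancedRel r) =
      QuotientAddGroup.mk (a' ⊗ₜ[ℤ] (r b * a)) := by
  rw [QuotientAddGroup.eq]
  have hh := (balancedRel r).neg_mem (mem_balancedRel r a' a b)
  rw [neg_sub, sub_eq_neg_add] at hh
  exact hh

end Aux

/-- For an adjunction `(m, e) : λ ⊣ ρ` in the 2-category of rings, the map
`ϑ : A ⊗_B A → A` determined by `ϑ(a' ⊗ a) = a'·ρ(e·λ(a))` is an additive bijection
with inverse `a ↦ a ⊗ m`; moreover it is left `A`-linear and satisfies
`ϑ(a' ⊗ a·ρ(b)) = ϑ(a' ⊗ a)·ρ(λ(ρ(b)))`. Here `A ⊗_B A` is realized as the quotient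
of `A ⊗_ℤ A` by the balancing relations. -/
theorem stmt_15 {A B : Type*} [Ring A] [Ring B]
    (l : A →+* B) (r : B →+* A) (m : A) (e : B) (h : IsRingAdjunction l r m e) :
    ∃ θ : ((A ⊗[ℤ] A) ⧸ balancedRel r) ≃+ A,
      (∀ a' a : A,
        θ (QuotientAddGroup.mk (a' ⊗ₜ[ℤ] a)) = a' * r (e * l a)) ∧
      (∀ a : A, θ.symm a = QuotientAddGroup.mk (a ⊗ₜ[ℤ] m)) ∧
      (∀ a'' a' a : A,
        θ (QuotientAddGroup.mk ((a'' * a') ⊗ₜ[ℤ] a)) =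
          a'' * θ (QuotientAddGroup.mk (a' ⊗ₜ[ℤ] a))) ∧
      (∀ (a' a : A) (b : B),
        θ (QuotientAddGroup.mk (a' ⊗ₜ[ℤ] (a * r b))) =
          θ (QuotientAddGroup.mk (a' ⊗ₜ[ℤ] a)) * r (l (r b))) := by
  obtain ⟨h1, h2, h3, h4⟩ := h
  -- θ₀ kills the relations
  have hker : balancedRel r ≤ (theta0 l r e).ker := by
    rw [balancedRel, AddSubgroup.closure_le]
    rintro z ⟨a', a, b, rfl⟩
    simp only [SetLike.mem_coe, AddMonoidHom.mem_ker, map_sub, theta0_tmul]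
    have : e * l (r b * a) = b * (e * l a) := by
      rw [map_mul, ← mul_assoc, h1 b, mul_assoc]
    rw [this, sub_eq_zero]
    simp [map_mul, mul_assoc]
  -- descend to the quotient
  let θ₁ : ((A ⊗[ℤ] A) ⧸ balancedRel r) →+ A :=
    QuotientAddGroup.lift _ (theta0 l r e) hker
  have θ₁_mk : ∀ x : A ⊗[ℤ] A, θ₁ (QuotientAddGroup.mk x) = theta0 l r e x :=
    fun _ => rfl
  -- the inverse
  let ψ : A →+ ((A ⊗[ℤ] A) ⧸ balancedRel r) :=
    (QuotientAddGroup.mk' _).comp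
      (AddMonoidHom.mk' (fun a => a ⊗ₜ[ℤ] m) (by intro x y; simp [add_tmul]))
  have hright : ∀ a : A, θ₁ (ψ a) = a := by
    intro a
    show theta0 l r e (a ⊗ₜ[ℤ] m) = a
    rw [theta0_tmul, h4, map_one, mul_one]
  have hleft : ∀ x : (A ⊗[ℤ] A) ⧸ balancedRel r, ψ (θ₁ x) = x := by
    intro x
    induction x using QuotientAddGroup.induction_on with
    | H x =>
      induction x using TensorProduct.induction_on with
      | zero => simp
      | tmul a' a =>
        show QuotientAddGroup.mk ((a' * r (e * l a)) ⊗ₜ[ℤ] m) = _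
        rw [mk_rel]
        congr 1
        rw [map_mul, mul_assoc, ← h2 a, ← mul_assoc, h3, one_mul]
      | add x y hx hy =>
        rw [QuotientAddGroup.mk_add, map_add, map_add, hx, hy]
  refine ⟨⟨⟨θ₁, ψ, hleft, hright⟩, map_add θ₁⟩, ?_, ?_, ?_, ?_⟩
  · intro a' a
    show θ₁ (QuotientAddGroup.mk (a' ⊗ₜ[ℤ] a)) = a' * r (e * l a)
    rw [θ₁_mk, theta0_tmul]
  · intro a; rfl
  · intro a'' a' a
    show θ₁ (QuotientAddGroup.mk ((a'' * a') ⊗ₜ[ℤ] a)) =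
        a'' * θ₁ (QuotientAddGroup.mk (a' ⊗ₜ[ℤ] a))
    rw [θ₁_mk, θ₁_mk, theta0_tmul, theta0_tmul, mul_assoc]
  · intro a' a b
    show θ₁ (QuotientAddGroup.mk (a' ⊗ₜ[ℤ] (a * r b))) =
        θ₁ (QuotientAddGroup.mk (a' ⊗ₜ[ℤ] a)) * r (l (r b))
    rw [θ₁_mk, θ₁_mk, theta0_tmul, theta0_tmul]
    have he : e * l (a * r b) = e * l a * l (r b) := by rw [map_mul, mul_assoc]
    rw [he, map_mul, mul_assoc]
end

section
/- Let (m, e) : λ ⊣ ρ be an adjunction in the 2-category of rings, with λ : A → B and ρ : B → A. Let End(ρ∘λ) = {h ∈ A | h·ρ(λ(a)) = ρ(λ(a))·h for all a ∈ A} and Hom(ρ∘λ∘ρ, ρ) = {t ∈ A | t·ρ(λ(ρ(b))) = ρ(b)·t for all b ∈ B}. Then the map h ↦ ρ(e)·h is an additive bijection from End(ρ∘λ) onto Hom(ρ∘λ∘ρ, ρ), with inverse t ↦ t·ρ(λ(m)). -/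
/-- For an adjunction `(m, e) : λ ⊣ ρ` in the 2-category of rings, the map
`h ↦ ρ(e)·h` is an additive bijection from `End(ρ∘λ)` onto `Hom(ρ∘λ∘ρ, ρ)`,
with inverse `t ↦ t·ρ(λ(m))`. -/
theorem stmt_17 {A B : Type*} [Ring A] [Ring B]
    (l : A →+* B) (r : B →+* A) (m : A) (e : B) (h : IsRingAdjunction l r m e) :
    (∀ h₁ h₂ : A, r e * (h₁ + h₂) = r e * h₁ + r e * h₂) ∧
    Set.BijOn (fun x : A => r e * x)
      {x : A | ∀ a : A, x * r (l a) = r (l a) * x}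
      {t : A | ∀ b : B, t * r (l (r b)) = r b * t} ∧
    Set.InvOn (fun t : A => t * r (l m)) (fun x : A => r e * x)
      {x : A | ∀ a : A, x * r (l a) = r (l a) * x}
      {t : A | ∀ b : B, t * r (l (r b)) = r b * t} := by
  obtain ⟨he, hm, h1, h2⟩ := h
  have maps1 : Set.MapsTo (fun x : A => r e * x)
      {x : A | ∀ a : A, x * r (l a) = r (l a) * x}
      {t : A | ∀ b : B, t * r (l (r b)) = r b * t} := by
    intro x hx b
    calc r e * x * r (l (r b)) = r e * r (l (r b)) * x := by
          rw [mul_assoc, hx (r b), ← mul_assoc]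
      _ = r b * (r e * x) := by
          rw [← map_mul, he b, map_mul, mul_assoc]
  have maps2 : Set.MapsTo (fun t : A => t * r (l m))
      {t : A | ∀ b : B, t * r (l (r b)) = r b * t}
      {x : A | ∀ a : A, x * r (l a) = r (l a) * x} := by
    intro t ht a
    calc t * r (l m) * r (l a) = t * r (l (r (l a))) * r (l m) := by
          rw [mul_assoc, ← map_mul, ← map_mul, hm a, map_mul, map_mul, ← mul_assoc]
      _ = r (l a) * (t * r (l m)) := by rw [ht (l a), mul_assoc]
  have inv : Set.InvOn (fun t : A => t * r (l m)) (fun x : A => r e * x)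
      {x : A | ∀ a : A, x * r (l a) = r (l a) * x}
      {t : A | ∀ b : B, t * r (l (r b)) = r b * t} := by
    constructor
    · intro x hx
      calc r e * x * r (l m) = r e * r (l m) * x := by
            rw [mul_assoc, hx m, ← mul_assoc]
        _ = x := by rw [← map_mul, h2, map_one, one_mul]
    · intro t ht
      calc r e * (t * r (l m)) = t * r (l (r e)) * r (l m) := by rw [← mul_assoc, ← ht e]
        _ = t := by rw [mul_assoc, ← map_mul, ← map_mul, h1, map_one, map_one, mul_one]
  exact ⟨fun h₁ h₂ => mul_add _ _ _, inv.bijOn maps1 maps2, inv⟩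
end

section
/- Let B be a ring and σ a ring endomorphism of B which is a monoid in the preorder of ring endomorphisms, i.e. σ∘σ ≤ σ and id_B ≤ σ. Then for every ring endomorphism α of B one has α ≤ σ if and only if σ∘α ≤ σ. -/
theorem RingHomLE.trans' {A B : Type*} [Ring A] [Ring B] {ρ τ μ : A →+* B}
    (h : RingHomLE ρ τ) (h' : RingHomLE τ μ) : RingHomLE ρ μ := by
  obtain ⟨n, b, a, hb, ha, hs⟩ := h
  obtain ⟨m, b', a', hb', ha', hs'⟩ := h'
  refine ⟨n * m,
    fun k => b' (finProdFinEquiv.symm k).2 * b (finProdFinEquiv.symm k).1,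
    fun k => a (finProdFinEquiv.symm k).1 * a' (finProdFinEquiv.symm k).2, ?_, ?_, ?_⟩
  · intro k x
    set i := (finProdFinEquiv.symm k).1
    set j := (finProdFinEquiv.symm k).2
    calc b' j * b i * ρ x = b' j * (b i * ρ x) := by rw [mul_assoc]
      _ = b' j * (τ x * b i) := by rw [hb i x]
      _ = (b' j * τ x) * b i := by rw [mul_assoc]
      _ = (μ x * b' j) * b i := by rw [hb' j x]
      _ = μ x * (b' j * b i) := by rw [mul_assoc]
  · intro k x
    set i := (finProdFinEquiv.symm k).1
    set j := (finProdFinEquiv.symm k).2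
    calc a i * a' j * μ x = a i * (a' j * μ x) := by rw [mul_assoc]
      _ = a i * (τ x * a' j) := by rw [ha' j x]
      _ = (a i * τ x) * a' j := by rw [mul_assoc]
      _ = (ρ x * a i) * a' j := by rw [ha i x]
      _ = ρ x * (a i * a' j) := by rw [mul_assoc]
  · rw [← finProdFinEquiv.sum_comp
      (fun k => (a (finProdFinEquiv.symm k).1 * a' (finProdFinEquiv.symm k).2) *
        (b' (finProdFinEquiv.symm k).2 * b (finProdFinEquiv.symm k).1))]
    simp only [Equiv.symm_apply_apply]
    rw [Fintype.sum_prod_type]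
    calc ∑ i, ∑ j, a i * a' j * (b' j * b i)
        = ∑ i, a i * (∑ j, a' j * b' j) * b i := by
          refine Finset.sum_congr rfl fun i _ => ?_
          rw [Finset.mul_sum, Finset.sum_mul]
          refine Finset.sum_congr rfl fun j _ => by simp [mul_assoc]
      _ = ∑ i, a i * b i := by simp [hs']
      _ = 1 := hs

/-- If `σ` is a monoid in the preorder of ring endomorphisms of `B`
(`σ∘σ ≤ σ` and `id ≤ σ`), then for every ring endomorphism `α` of `B` one has
`α ≤ σ` iff `σ∘α ≤ σ`. -/
theorem stmt_18 {B : Type*} [Ring B] (σ : B →+* B)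
    (h₁ : RingHomLE (σ.comp σ) σ) (h₂ : RingHomLE (RingHom.id B) σ)
    (α : B →+* B) :
    RingHomLE α σ ↔ RingHomLE (σ.comp α) σ := by
  constructor
  · intro h
    -- σ∘α ≤ σ∘σ by applying σ to the intertwiners, then σ∘σ ≤ σ
    refine RingHomLE.trans' ?_ h₁
    obtain ⟨n, b, a, hb, ha, hs⟩ := h
    refine ⟨n, fun i => σ (b i), fun i => σ (a i), ?_, ?_, ?_⟩
    · intro i x
      simp only [RingHom.comp_apply, ← map_mul, hb i x]
    · intro i x
      simp only [RingHom.comp_apply, ← map_mul, ha i x]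
    · calc ∑ i, σ (a i) * σ (b i) = σ (∑ i, a i * b i) := by
            rw [map_sum]; exact Finset.sum_congr rfl fun i _ => (map_mul σ _ _).symm
        _ = 1 := by rw [hs, map_one]
  · intro h
    -- α = id∘α ≤ σ∘α via whiskering h₂, then σ∘α ≤ σ
    refine RingHomLE.trans' ?_ h
    obtain ⟨n, e, f, he, hf, hs⟩ := h₂
    refine ⟨n, e, f, ?_, ?_, hs⟩
    · intro i x
      simpa using he i (α x)
    · intro i x
      simpa using hf i (α x)
end

section
/- Let (m, e) : λ ⊣ ρ be an adjunction in the 2-category of rings, with λ : A → B and ρ : B → A, and suppose id_B ≤ λ∘ρ, witnessed by elements v_1,…,v_n ∈ Hom(id_B, λ∘ρ) and w_1,…,w_n ∈ Hom(λ∘ρ, id_B) with Σ_k w_k·v_k = 1_B. Then the additive map E : A → B defined by E(a) = Σ_k w_k·λ(a)·v_k satisfies E(ρ(b)·a·ρ(b')) = b·E(a)·b' for all a ∈ A and b, b' ∈ B, and E(1_A) = 1_B; in particular E(ρ(b)) = b for all b ∈ B, so ρ : B → A is a split extension of B-B-bimodules. -/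
/-- Let `(m, e) : λ ⊣ ρ` be an adjunction in the 2-category of rings and suppose
`id_B ≤ λ∘ρ`, witnessed by intertwiners `v_k : id_B → λ∘ρ` and `w_k : λ∘ρ → id_B`
with `Σ_k w_k·v_k = 1`. Then `E : A → B`, `E(a) = Σ_k w_k·λ(a)·v_k`, is a
`B`-`B`-bimodule map with `E(1) = 1`; in particular `E(ρ(b)) = b`, so `ρ` is a
split extension of `B`-`B`-bimodules. -/
theorem stmt_19 {A B : Type*} [Ring A] [Ring B]
    (l : A →+* B) (r : B →+* A) (m : A) (e : B) (h : IsRingAdjunction l r m e)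
    (n : ℕ) (v w : Fin n → B)
    (hv : ∀ k, IsIntertwiner (RingHom.id B) (l.comp r) (v k))
    (hw : ∀ k, IsIntertwiner (l.comp r) (RingHom.id B) (w k))
    (hsum : (∑ k, w k * v k) = 1) :
    (∀ (a : A) (b b' : B),
      (∑ k, w k * l (r b * a * r b') * v k) = b * (∑ k, w k * l a * v k) * b') ∧
    ((∑ k, w k * l 1 * v k) = 1) ∧
    (∀ b : B, (∑ k, w k * l (r b) * v k) = b) := by
  have key : ∀ (a : A) (b b' : B),
      (∑ k, w k * l (r b * a * r b') * v k) = b * (∑ k, w k * l a * v k) * b' := by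
    intro a b b'
    rw [Finset.mul_sum, Finset.sum_mul]
    refine Finset.sum_congr rfl fun k _ => ?_
    have h1 : w k * l (r b) = b * w k := by
      simpa using hw k b
    have h2 : v k * b' = l (r b') * v k := by
      simpa using hv k b'
    calc w k * l (r b * a * r b') * v k
        = (w k * l (r b)) * l a * (l (r b') * v k) := by
          simp [map_mul, mul_assoc]
      _ = b * (w k * l a * v k) * b' := by rw [h1, ← h2]; simp [mul_assoc]
  refine ⟨key, ?_, ?_⟩
  · simpa using hsum
  · intro b
    have := key 1 b 1
    simpa [hsum] using this
end
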